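/- Let H be a positive semidefinite Hermitian d×d matrix and let ψ be a random unit vector distributed according to the rotation-invariant probability measure μ on the unit sphere of ℂ^d ⊗ ℂ^d. Then the ensemble-average ergotropy of the reduced state satisfies 0 ≤ 𝔼_μ[E(T(ψ),H)] ≤ tr(H)/d. -/

import Mathlib

open scoped BigOperators ComplexOrder
open Matrix

/-- The eigenvalues of a Hermitian matrix, listed in increasing order
(junk value `0` for non-Hermitian matrices). -/
noncomputable def eigsInc {d : ℕ} (A : Matrix (Fin d) (Fin d) ℂ) : Fin d → ℝ :=
  @dite _ A.IsHermitian (Classical.propDecidable _)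
    (fun h => h.eigenvalues ∘ Tuple.sort h.eigenvalues) (fun _ => 0)

/-- The eigenvalues of a Hermitian matrix, listed in decreasing order. -/
noncomputable def eigsDec {d : ℕ} (A : Matrix (Fin d) (Fin d) ℂ) : Fin d → ℝ :=
  fun k => eigsInc A k.rev

/-- Ergotropy `E(ρ,H) = tr(ρH) - ∑ₖ λₖ Eₖ` with `λ` decreasing, `E` increasing. -/
noncomputable def ergotropy {d : ℕ} (ρ H : Matrix (Fin d) (Fin d) ℂ) : ℝ :=
  ((ρ * H).trace).re - ∑ k : Fin d, eigsDec ρ k * eigsInc H k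

/-- Operator norm (ℓ² → ℓ²) of a matrix. -/
noncomputable def opNorm {d : ℕ} (A : Matrix (Fin d) (Fin d) ℂ) : ℝ :=
  ‖Matrix.toEuclideanCLM (𝕜 := ℂ) A‖

/-- Trace norm `‖A‖₁ = tr √(AᴴA)`. -/
noncomputable def traceNorm {d : ℕ} (A : Matrix (Fin d) (Fin d) ℂ) : ℝ :=
  ((((Matrix.posSemidef_conjTranspose_mul_self A).1.eigenvectorUnitary : Matrix (Fin d) (Fin d) ℂ) *
    diagonal (((↑) : ℝ → ℂ) ∘ (√·) ∘ (Matrix.posSemidef_conjTranspose_mul_self A).1.eigenvalues) *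
    (star (Matrix.posSemidef_conjTranspose_mul_self A).1.eigenvectorUnitary :
      Matrix (Fin d) (Fin d) ℂ)).trace).re

/-- Trace distance. -/
noncomputable def traceDist {d : ℕ} (ρ σ : Matrix (Fin d) (Fin d) ℂ) : ℝ :=
  traceNorm (ρ - σ) / 2

/-- Positive semidefinite square root (junk value `0` on non-PSD matrices). -/
noncomputable def psdSqrt {d : ℕ} (A : Matrix (Fin d) (Fin d) ℂ) : Matrix (Fin d) (Fin d) ℂ :=
  @dite _ A.PosSemidef (Classical.propDecidable _) (fun h => (h.1.eigenvectorUnitary : Matrix (Fin d) (Fin d) ℂ) *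
    diagonal (((↑) : ℝ → ℂ) ∘ (√·) ∘ h.1.eigenvalues) * (star h.1.eigenvectorUnitary : Matrix (Fin d) (Fin d) ℂ)) (fun _ => 0)

/-- Uhlmann fidelity `F(ρ,σ) = (tr √(√ρ σ √ρ))²`. -/
noncomputable def fidelity {d : ℕ} (ρ σ : Matrix (Fin d) (Fin d) ℂ) : ℝ :=
  ((psdSqrt (psdSqrt ρ * σ * psdSqrt ρ)).trace).re ^ 2

/-- Bures distance. -/
noncomputable def buresDist {d : ℕ} (ρ σ : Matrix (Fin d) (Fin d) ℂ) : ℝ :=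
  Real.sqrt (2 - 2 * Real.sqrt (fidelity ρ σ))

/-- Hilbert–Schmidt distance. -/
noncomputable def hsDist {d : ℕ} (ρ σ : Matrix (Fin d) (Fin d) ℂ) : ℝ :=
  Real.sqrt ((((ρ - σ)ᴴ * (ρ - σ)).trace).re)

/-- von Neumann entropy `S(ρ) = -tr(ρ ln ρ) = -∑ᵢ λᵢ ln λᵢ`. -/
noncomputable def vnEntropy {d : ℕ} (ρ : Matrix (Fin d) (Fin d) ℂ) : ℝ :=
  -∑ i : Fin d, eigsInc ρ i * Real.log (eigsInc ρ i)

/-- `ψ ∈ ℂᵈ ⊗ ℂᵈ` is a purification of `ρ`. -/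
def IsPurification {d : ℕ} (ρ : Matrix (Fin d) (Fin d) ℂ)
    (ψ : EuclideanSpace ℂ (Fin d × Fin d)) : Prop :=
  ‖ψ‖ = 1 ∧ ∀ i j, ρ i j = ∑ k : Fin d, ψ (i, k) * (starRingEnd ℂ) (ψ (j, k))

/-- Partial trace over the second tensor factor of `|ψ⟩⟨ψ|`. -/
noncomputable def partialTrace {d : ℕ} (ψ : EuclideanSpace ℂ (Fin d × Fin d)) :
    Matrix (Fin d) (Fin d) ℂ :=
  Matrix.of fun i j => ∑ k : Fin d, ψ (i, k) * (starRingEnd ℂ) (ψ (j, k))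


/-- Borel measurable structure on . -/
noncomputable instance {ι : Type*} [Fintype ι] : MeasurableSpace (EuclideanSpace ℂ ι) := borel _

instance {ι : Type*} [Fintype ι] : BorelSpace (EuclideanSpace ℂ ι) := ⟨rfl⟩


/-! ### Auxiliary lemmas -/

section AuxSpectral
open Finset

lemma partialTrace_posSemidef {d : ℕ} (ψ : EuclideanSpace ℂ (Fin d × Fin d)) :
    (partialTrace ψ).PosSemidef := by
  have : partialTrace ψ =
      (Matrix.of fun (i : Fin d) (k : Fin d) => ψ (i, k)) *
      (Matrix.of fun (i : Fin d) (k : Fin d) => ψ (i, k))ᴴ := by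
    ext i j
    simp [partialTrace, Matrix.mul_apply, Matrix.conjTranspose_apply]
  rw [this]
  exact Matrix.posSemidef_self_mul_conjTranspose _

lemma eigsInc_eq {d : ℕ} {A : Matrix (Fin d) (Fin d) ℂ} (hA : A.IsHermitian) :
    eigsInc A = hA.eigenvalues ∘ Tuple.sort hA.eigenvalues := by
  simp only [eigsInc]; rw [dif_pos hA]

lemma eigsInc_nonneg {d : ℕ} {A : Matrix (Fin d) (Fin d) ℂ} (hA : A.PosSemidef) (k : Fin d) :
    0 ≤ eigsInc A k := by
  rw [eigsInc_eq hA.1]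
  exact hA.eigenvalues_nonneg _

lemma eigsDec_nonneg {d : ℕ} {A : Matrix (Fin d) (Fin d) ℂ} (hA : A.PosSemidef) (k : Fin d) :
    0 ≤ eigsDec A k := eigsInc_nonneg hA _

lemma eigsInc_monotone {d : ℕ} (A : Matrix (Fin d) (Fin d) ℂ) : Monotone (eigsInc A) := by
  by_cases hA : A.IsHermitian
  · rw [eigsInc_eq hA]; exact Tuple.monotone_sort _
  · have : eigsInc A = 0 := by simp only [eigsInc]; rw [dif_neg hA]
    rw [this]; exact monotone_const

lemma eigsDec_antitone {d : ℕ} (A : Matrix (Fin d) (Fin d) ℂ) : Antitone (eigsDec A) := by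
  intro a b hab
  exact eigsInc_monotone A (by simpa using Fin.rev_le_rev.mpr hab)

lemma perm_rearrange {n : ℕ} (f g : Fin n → ℝ) (hf : Antitone f) (hg : Monotone g)
    (σ : Equiv.Perm (Fin n)) : ∑ i, f i * g i ≤ ∑ i, f i * g (σ i) := by
  have hfg : Antivary f g := by
    intro i j hij
    rcases le_or_gt i j with h | h
    · exact hf h
    · exact absurd (hg h.le) (not_le.mpr hij)
  exact hfg.sum_mul_le_sum_mul_comp_perm (σ := σ)

lemma ds_rearrange {n : ℕ} (f g : Fin n → ℝ) (hf : Antitone f) (hg : Monotone g)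
    (S : Matrix (Fin n) (Fin n) ℝ) (hS : S ∈ doublyStochastic ℝ (Fin n)) :
    ∑ i, f i * g i ≤ ∑ i, ∑ j, S i j * (f i * g j) := by
  obtain ⟨w, hw0, hw1, hwS⟩ := exists_eq_sum_perm_of_mem_doublyStochastic hS
  have key : ∀ i j, S i j = ∑ σ : Equiv.Perm (Fin n), w σ * (σ.permMatrix ℝ) i j := by
    intro i j
    rw [← hwS]
    simp [Matrix.sum_apply]
  calc ∑ i, f i * g i = ∑ σ : Equiv.Perm (Fin n), w σ * ∑ i, f i * g i := by
        rw [← Finset.sum_mul, hw1, one_mul]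
    _ ≤ ∑ σ : Equiv.Perm (Fin n), w σ * ∑ i, f i * g (σ i) := by
        apply Finset.sum_le_sum
        intro σ _
        exact mul_le_mul_of_nonneg_left (perm_rearrange f g hf hg σ) (hw0 σ)
    _ = ∑ i, ∑ j, S i j * (f i * g j) := by
        have : ∀ σ : Equiv.Perm (Fin n), ∑ i, f i * g (σ i)
            = ∑ i, ∑ j, (σ.permMatrix ℝ) i j * (f i * g j) := by
          intro σ
          refine Finset.sum_congr rfl fun i _ => ?_
          rw [Finset.sum_eq_single (σ i)]
          · simp [Equiv.Perm.permMatrix, PEquiv.toMatrix_apply, Equiv.toPEquiv_apply, mul_comm]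
          · intro j _ hj
            simp [Equiv.Perm.permMatrix, PEquiv.toMatrix_apply, Equiv.toPEquiv_apply, Ne.symm hj]
          · simp
        simp_rw [this, key, Finset.sum_mul, Finset.mul_sum]
        rw [Finset.sum_comm]
        refine Finset.sum_congr rfl fun i _ => Finset.sum_comm.trans ?_
        refine Finset.sum_congr rfl fun j _ => Finset.sum_congr rfl fun σ _ => by ring

variable {d : ℕ} {ρ H : Matrix (Fin d) (Fin d) ℂ}

lemma trace_spectral (hρ : ρ.IsHermitian) (hH : H.IsHermitian) :
    ((ρ * H).trace).re =
      ∑ a, ∑ b, Complex.normSq ((star (hρ.eigenvectorUnitary : Matrix (Fin d) (Fin d) ℂ) *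
          (hH.eigenvectorUnitary : Matrix (Fin d) (Fin d) ℂ)) a b) *
        (hρ.eigenvalues a * hH.eigenvalues b) := by
  have hco : (RCLike.ofReal : ℝ → ℂ) = Complex.ofReal := rfl
  set U : Matrix (Fin d) (Fin d) ℂ := (hρ.eigenvectorUnitary : Matrix (Fin d) (Fin d) ℂ) with hU
  set V : Matrix (Fin d) (Fin d) ℂ := (hH.eigenvectorUnitary : Matrix (Fin d) (Fin d) ℂ) with hV
  set W : Matrix (Fin d) (Fin d) ℂ := star U * V with hWdef
  have h1 : ρ * H = U * (diagonal (RCLike.ofReal ∘ hρ.eigenvalues) * (star U * H)) := by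
    conv_lhs => rw [hρ.spectral_theorem]
    simp only [Unitary.conjStarAlgAut_apply, Matrix.mul_assoc]
    rfl
  have h2 : (ρ * H).trace
      = (diagonal (RCLike.ofReal ∘ hρ.eigenvalues) * (star U * H * U)).trace := by
    rw [h1, Matrix.trace_mul_comm]
    simp only [Matrix.mul_assoc]
  have h3 : star U * H * U = W * diagonal (RCLike.ofReal ∘ hH.eigenvalues) * star W := by
    conv_lhs => rw [hH.spectral_theorem]
    rw [hWdef]
    simp only [Unitary.conjStarAlgAut_apply, Matrix.star_mul, star_star, Matrix.mul_assoc]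
    rfl
  rw [h2, h3]
  rw [Matrix.trace]
  have hdiag : ∀ a : Fin d,
      (diagonal (RCLike.ofReal ∘ hρ.eigenvalues) *
        (W * diagonal (RCLike.ofReal ∘ hH.eigenvalues) * star W)).diag a
      = ∑ b, ((hρ.eigenvalues a * hH.eigenvalues b * Complex.normSq (W a b) : ℝ) : ℂ) := by
    intro a
    rw [Matrix.diag_apply, Matrix.diagonal_mul]
    rw [Matrix.mul_apply]
    rw [Finset.mul_sum]
    refine Finset.sum_congr rfl fun b _ => ?_
    rw [Matrix.mul_diagonal]
    rw [Matrix.star_apply]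
    simp only [hco, Function.comp_apply, Matrix.conjTranspose_apply]
    push_cast
    rw [← Complex.mul_conj, RCLike.star_def]
    ring
  simp only [hdiag]
  rw [Complex.re_sum]
  refine Finset.sum_congr rfl fun a _ => ?_
  rw [Complex.re_sum]
  refine Finset.sum_congr rfl fun b _ => ?_
  rw [Complex.ofReal_re]
  ring

lemma unitary_normSq_ds (W : Matrix (Fin d) (Fin d) ℂ)
    (h1 : W * star W = 1) (h2 : star W * W = 1) :
    Matrix.of (fun a b => Complex.normSq (W a b)) ∈ doublyStochastic ℝ (Fin d) := by
  rw [mem_doublyStochastic_iff_sum]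
  refine ⟨fun i j => Complex.normSq_nonneg _, fun a => ?_, fun b => ?_⟩
  · have := congrArg (fun M : Matrix (Fin d) (Fin d) ℂ => M a a) h1
    simp only [Matrix.mul_apply, Matrix.one_apply_eq] at this
    have h' : ((∑ b, Complex.normSq (W a b) : ℝ) : ℂ) = 1 := by
      rw [← this]
      push_cast
      refine Finset.sum_congr rfl fun b _ => ?_
      rw [Matrix.star_apply, RCLike.star_def, Complex.mul_conj]
    exact_mod_cast h'
  · have := congrArg (fun M : Matrix (Fin d) (Fin d) ℂ => M b b) h2
    simp only [Matrix.mul_apply, Matrix.one_apply_eq] at this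
    have h' : ((∑ a, Complex.normSq (W a b) : ℝ) : ℂ) = 1 := by
      rw [← this]
      push_cast
      refine Finset.sum_congr rfl fun a _ => ?_
      rw [Matrix.star_apply, RCLike.star_def, mul_comm, Complex.mul_conj]
    exact_mod_cast h'

lemma sum_eigs_le_trace (hρ : ρ.IsHermitian) (hH : H.IsHermitian) :
    ∑ k, eigsDec ρ k * eigsInc H k ≤ ((ρ * H).trace).re := by
  classical
  set U : Matrix (Fin d) (Fin d) ℂ := (hρ.eigenvectorUnitary : Matrix (Fin d) (Fin d) ℂ) with hU
  set V : Matrix (Fin d) (Fin d) ℂ := (hH.eigenvectorUnitary : Matrix (Fin d) (Fin d) ℂ) with hV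
  set W : Matrix (Fin d) (Fin d) ℂ := star U * V with hWdef
  have hU1 : U * star U = 1 := mem_unitaryGroup_iff.mp hρ.eigenvectorUnitary.2
  have hU2 : star U * U = 1 := mem_unitaryGroup_iff'.mp hρ.eigenvectorUnitary.2
  have hV1 : V * star V = 1 := mem_unitaryGroup_iff.mp hH.eigenvectorUnitary.2
  have hV2 : star V * V = 1 := mem_unitaryGroup_iff'.mp hH.eigenvectorUnitary.2
  have hW1 : W * star W = 1 := by
    rw [hWdef, Matrix.star_mul, star_star]
    calc star U * V * (star V * U) = star U * (V * star V) * U := by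
          simp only [Matrix.mul_assoc]
      _ = 1 := by rw [hV1, Matrix.mul_one, hU2]
  have hW2 : star W * W = 1 := by
    rw [hWdef, Matrix.star_mul, star_star]
    calc star V * U * (star U * V) = star V * (U * star U) * V := by
          simp only [Matrix.mul_assoc]
      _ = 1 := by rw [hU1, Matrix.mul_one, hV2]
  set S : Matrix (Fin d) (Fin d) ℝ := Matrix.of (fun a b => Complex.normSq (W a b)) with hSdef
  have hS : S ∈ doublyStochastic ℝ (Fin d) := unitary_normSq_ds W hW1 hW2
  set p : Equiv.Perm (Fin d) := Fin.revPerm.trans (Tuple.sort hρ.eigenvalues) with hp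
  set q : Equiv.Perm (Fin d) := Tuple.sort hH.eigenvalues with hq
  have hfP : ∀ k, eigsDec ρ k = hρ.eigenvalues (p k) := by
    intro k
    simp [eigsDec, eigsInc_eq hρ, hp, Equiv.trans_apply]
  have hgQ : ∀ k, eigsInc H k = hH.eigenvalues (q k) := by
    intro k
    simp [eigsInc_eq hH, hq]
  set S' : Matrix (Fin d) (Fin d) ℝ := Matrix.of (fun k l => S (p k) (q l)) with hS'def
  have hS' : S' ∈ doublyStochastic ℝ (Fin d) := by
    rw [mem_doublyStochastic_iff_sum]
    refine ⟨fun i j => nonneg_of_mem_doublyStochastic hS, fun k => ?_, fun l => ?_⟩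
    · rw [show ∑ l, S' k l = ∑ l, S (p k) (q l) from rfl]
      rw [Equiv.sum_comp q (fun j => S (p k) j)]
      exact sum_row_of_mem_doublyStochastic hS _
    · rw [show ∑ k, S' k l = ∑ k, S (p k) (q l) from rfl]
      rw [Equiv.sum_comp p (fun i => S i (q l))]
      exact sum_col_of_mem_doublyStochastic hS _
  have main := ds_rearrange (eigsDec ρ) (eigsInc H) (eigsDec_antitone ρ) (eigsInc_monotone H) S' hS'
  have hre : ∑ k, ∑ l, S' k l * (eigsDec ρ k * eigsInc H l) = ((ρ * H).trace).re := by
    rw [trace_spectral hρ hH]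
    have step1 : ∀ k, ∑ l, S' k l * (eigsDec ρ k * eigsInc H l)
        = ∑ j, S (p k) j * (hρ.eigenvalues (p k) * hH.eigenvalues j) := by
      intro k
      rw [← Equiv.sum_comp q (fun j => S (p k) j * (hρ.eigenvalues (p k) * hH.eigenvalues j))]
      refine Finset.sum_congr rfl fun l _ => ?_
      rw [hfP, hgQ]
      rfl
    simp_rw [step1]
    rw [Equiv.sum_comp p (fun i => ∑ j, S i j * (hρ.eigenvalues i * hH.eigenvalues j))]
    refine Finset.sum_congr rfl fun i _ => Finset.sum_congr rfl fun j _ => ?_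
    rw [hSdef]
    simp only [Matrix.of_apply]
    rfl
  rw [← hre]
  exact main

end AuxSpectral

section AuxMeasure
open MeasureTheory Finset

variable {ι : Type*} [Fintype ι] [DecidableEq ι]

/-- Sign flip on one coordinate, as a linear isometry equivalence. -/
noncomputable def signIso (a : ι) : EuclideanSpace ℂ ι ≃ₗᵢ[ℂ] EuclideanSpace ℂ ι where
  toLinearEquiv :=
  { toFun := fun ψ => WithLp.toLp 2 (fun x => if x = a then -ψ x else ψ x)
    invFun := fun ψ => WithLp.toLp 2 (fun x => if x = a then -ψ x else ψ x)
    map_add' := fun ψ φ => by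
      ext x; by_cases h : x = a <;> simp [h] <;> ring
    map_smul' := fun c ψ => by
      ext x; by_cases h : x = a <;> simp [h]
    left_inv := fun ψ => by ext x; by_cases h : x = a <;> simp [h]
    right_inv := fun ψ => by ext x; by_cases h : x = a <;> simp [h] }
  norm_map' := fun ψ => by
    simp only [EuclideanSpace.norm_eq]
    congr 1
    refine Finset.sum_congr rfl fun x _ => ?_
    by_cases h : x = a <;> simp [h]

lemma signIso_apply (a : ι) (ψ : EuclideanSpace ℂ ι) (x : ι) :
    signIso a ψ x = if x = a then -ψ x else ψ x := rfl

/-- Swap of two coordinates as a linear isometry equivalence. -/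
noncomputable def swapIso (a b : ι) : EuclideanSpace ℂ ι ≃ₗᵢ[ℂ] EuclideanSpace ℂ ι :=
  LinearIsometryEquiv.piLpCongrLeft 2 ℂ ℂ (Equiv.swap a b)

lemma swapIso_apply (a b : ι) (ψ : EuclideanSpace ℂ ι) (x : ι) :
    swapIso a b ψ x = ψ (Equiv.swap a b x) := by
  rw [swapIso, LinearIsometryEquiv.piLpCongrLeft_apply]
  rw [show (Equiv.piCongrLeft' (fun _ : ι => ℂ) (Equiv.swap a b) ψ) x
    = ψ ((Equiv.swap a b).symm x) from rfl]
  rw [Equiv.symm_swap]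

lemma coord_norm_le (ψ : EuclideanSpace ℂ ι) (a : ι) : ‖ψ a‖ ≤ ‖ψ‖ := by
  rw [EuclideanSpace.norm_eq]
  rw [show ‖ψ a‖ = Real.sqrt (‖ψ a‖ ^ 2) from (Real.sqrt_sq (norm_nonneg _)).symm]
  apply Real.sqrt_le_sqrt
  exact Finset.single_le_sum (f := fun x => ‖ψ x‖ ^ 2)
    (fun x _ => sq_nonneg _) (Finset.mem_univ a)

lemma continuous_coord (a : ι) : Continuous (fun ψ : EuclideanSpace ℂ ι => ψ a) :=
  (EuclideanSpace.proj (𝕜 := ℂ) a).continuous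

variable (μ : Measure (EuclideanSpace ℂ ι)) [IsProbabilityMeasure μ]

lemma integral_comp_iso (hinv : ∀ U : EuclideanSpace ℂ ι ≃ₗᵢ[ℂ] EuclideanSpace ℂ ι,
      Measure.map U μ = μ) (U : EuclideanSpace ℂ ι ≃ₗᵢ[ℂ] EuclideanSpace ℂ ι)
    (f : EuclideanSpace ℂ ι → ℂ) :
    ∫ ψ, f (U ψ) ∂μ = ∫ ψ, f ψ ∂μ := by
  conv_rhs => rw [← hinv U]
  rw [show Measure.map (⇑U) μ = Measure.map (⇑(U.toHomeomorph.toMeasurableEquiv)) μ from rfl]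
  exact (MeasureTheory.integral_map_equiv (U.toHomeomorph.toMeasurableEquiv) f).symm

lemma integrable_coord_mul (a b : ι) (hsphere : ∀ᵐ ψ ∂μ, ‖ψ‖ = 1) :
    Integrable (fun ψ : EuclideanSpace ℂ ι => ψ a * (starRingEnd ℂ) (ψ b)) μ := by
  have hcont : Continuous (fun ψ : EuclideanSpace ℂ ι => ψ a * (starRingEnd ℂ) (ψ b)) :=
    (continuous_coord a).mul ((continuous_coord b).star)
  refine Integrable.mono' (integrable_const 1) hcont.aestronglyMeasurable ?_
  filter_upwards [hsphere] with ψ hψ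
  rw [norm_mul]
  calc ‖ψ a‖ * ‖(starRingEnd ℂ) (ψ b)‖ = ‖ψ a‖ * ‖ψ b‖ := by rw [RCLike.norm_conj]
    _ ≤ ‖ψ‖ * ‖ψ‖ := mul_le_mul (coord_norm_le ψ a) (coord_norm_le ψ b)
        (norm_nonneg _) (norm_nonneg _)
    _ = 1 := by rw [hψ]; norm_num

lemma moment_offdiag (hinv : ∀ U : EuclideanSpace ℂ ι ≃ₗᵢ[ℂ] EuclideanSpace ℂ ι,
      Measure.map U μ = μ) {a b : ι} (hab : a ≠ b) :
    ∫ ψ, ψ a * (starRingEnd ℂ) (ψ b) ∂μ = 0 := by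
  have key := integral_comp_iso μ hinv (signIso a)
    (fun ψ => ψ a * (starRingEnd ℂ) (ψ b))
  have heq : ∀ ψ : EuclideanSpace ℂ ι,
      (signIso a ψ) a * (starRingEnd ℂ) ((signIso a ψ) b)
      = -(ψ a * (starRingEnd ℂ) (ψ b)) := by
    intro ψ
    rw [signIso_apply, signIso_apply, if_pos rfl, if_neg hab.symm]
    ring
  simp only [heq] at key
  rw [integral_neg] at key
  have h0 : (∫ ψ, ψ a * (starRingEnd ℂ) (ψ b) ∂μ)
      + (∫ ψ, ψ a * (starRingEnd ℂ) (ψ b) ∂μ) = 0 := by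
    nth_rewrite 1 [← key]
    exact neg_add_cancel _
  exact add_self_eq_zero.mp h0

lemma moment_diag_eq (hinv : ∀ U : EuclideanSpace ℂ ι ≃ₗᵢ[ℂ] EuclideanSpace ℂ ι,
      Measure.map U μ = μ) (a b : ι) :
    ∫ ψ, ψ a * (starRingEnd ℂ) (ψ a) ∂μ = ∫ ψ, ψ b * (starRingEnd ℂ) (ψ b) ∂μ := by
  have key := integral_comp_iso μ hinv (swapIso a b)
    (fun ψ => ψ a * (starRingEnd ℂ) (ψ a))
  have heq : ∀ ψ : EuclideanSpace ℂ ι,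
      (swapIso a b ψ) a * (starRingEnd ℂ) ((swapIso a b ψ) a)
      = ψ b * (starRingEnd ℂ) (ψ b) := by
    intro ψ
    simp only [swapIso_apply]
    rw [Equiv.swap_apply_left]
  simp only [heq] at key
  exact key.symm

lemma moment_diag_sum (hsphere : ∀ᵐ ψ ∂μ, ‖ψ‖ = 1) :
    ∑ a : ι, ∫ ψ, ψ a * (starRingEnd ℂ) (ψ a) ∂μ = 1 := by
  rw [← integral_finset_sum univ (fun a _ => integrable_coord_mul μ a a hsphere)]
  have heq : ∀ᵐ ψ ∂μ, ∑ a : ι, ψ a * (starRingEnd ℂ) (ψ a) = (1 : ℂ) := by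
    filter_upwards [hsphere] with ψ hψ
    have : ∀ a : ι, ψ a * (starRingEnd ℂ) (ψ a) = ((‖ψ a‖ ^ 2 : ℝ) : ℂ) := by
      intro a
      rw [Complex.mul_conj']
      norm_cast
    simp only [this]
    rw [← Complex.ofReal_sum]
    have hnorm : ∑ a : ι, ‖ψ a‖ ^ 2 = 1 := by
      have := EuclideanSpace.norm_eq ψ
      rw [hψ] at this
      have h2 := congrArg (fun t : ℝ => t ^ 2) this
      simp only at h2
      rw [Real.sq_sqrt (Finset.sum_nonneg fun a _ => sq_nonneg _)] at h2
      rw [← h2]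
      norm_num
    rw [hnorm, Complex.ofReal_one]
  rw [integral_congr_ae heq]
  simp

lemma moment_diag (hsphere : ∀ᵐ ψ ∂μ, ‖ψ‖ = 1)
    (hinv : ∀ U : EuclideanSpace ℂ ι ≃ₗᵢ[ℂ] EuclideanSpace ℂ ι, Measure.map U μ = μ) (a : ι) :
    ∫ ψ, ψ a * (starRingEnd ℂ) (ψ a) ∂μ = 1 / (Fintype.card ι : ℂ) := by
  have hsum := moment_diag_sum μ hsphere
  have hall : ∀ b : ι, ∫ ψ, ψ b * (starRingEnd ℂ) (ψ b) ∂μ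
      = ∫ ψ, ψ a * (starRingEnd ℂ) (ψ a) ∂μ := fun b => moment_diag_eq μ hinv b a
  rw [Finset.sum_congr rfl (fun b _ => hall b)] at hsum
  rw [Finset.sum_const, Finset.card_univ, nsmul_eq_mul] at hsum
  have hcard : (Fintype.card ι : ℂ) ≠ 0 := by
    have : Nonempty ι := by
      by_contra h
      rw [not_nonempty_iff] at h
      simp [Fintype.card_eq_zero] at hsum
    simp [Fintype.card_ne_zero]
  field_simp at hsum ⊢
  linear_combination hsum

end AuxMeasure

section AuxTrace
open MeasureTheory Finset

variable {d : ℕ} (H : Matrix (Fin d) (Fin d) ℂ)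
variable (μ : Measure (EuclideanSpace ℂ (Fin d × Fin d))) [IsProbabilityMeasure μ]

lemma trace_expand (ψ : EuclideanSpace ℂ (Fin d × Fin d)) :
    (partialTrace ψ * H).trace
      = ∑ i : Fin d, ∑ j : Fin d, ∑ k : Fin d,
          ψ (i, k) * (starRingEnd ℂ) (ψ (j, k)) * H j i := by
  rw [Matrix.trace]
  refine Finset.sum_congr rfl fun i _ => ?_
  rw [Matrix.diag_apply, Matrix.mul_apply]
  refine Finset.sum_congr rfl fun j _ => ?_
  rw [show partialTrace ψ i j = ∑ k, ψ (i, k) * (starRingEnd ℂ) (ψ (j, k)) from rfl]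
  rw [Finset.sum_mul]

lemma integrable_trace (hsphere : ∀ᵐ ψ ∂μ, ‖ψ‖ = 1) :
    Integrable (fun ψ => (partialTrace ψ * H).trace) μ := by
  have : (fun ψ : EuclideanSpace ℂ (Fin d × Fin d) => (partialTrace ψ * H).trace)
      = fun ψ => ∑ i : Fin d, ∑ j : Fin d, ∑ k : Fin d,
          ψ (i, k) * (starRingEnd ℂ) (ψ (j, k)) * H j i := by
    funext ψ; exact trace_expand H ψ
  rw [this]
  refine integrable_finset_sum _ fun i _ => integrable_finset_sum _ fun j _ =>
    integrable_finset_sum _ fun k _ => ?_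
  exact (integrable_coord_mul μ (i, k) (j, k) hsphere).mul_const _

lemma integral_trace (hd : 0 < d) (hsphere : ∀ᵐ ψ ∂μ, ‖ψ‖ = 1)
    (hinv : ∀ U : EuclideanSpace ℂ (Fin d × Fin d) ≃ₗᵢ[ℂ] EuclideanSpace ℂ (Fin d × Fin d),
      Measure.map U μ = μ) :
    ∫ ψ, (partialTrace ψ * H).trace ∂μ = H.trace / (d : ℂ) := by
  have hre : (fun ψ : EuclideanSpace ℂ (Fin d × Fin d) => (partialTrace ψ * H).trace)
      = fun ψ => ∑ i : Fin d, ∑ j : Fin d, ∑ k : Fin d,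
          ψ (i, k) * (starRingEnd ℂ) (ψ (j, k)) * H j i := by
    funext ψ; exact trace_expand H ψ
  rw [hre]
  rw [integral_finset_sum _ (fun i _ => integrable_finset_sum _ fun j _ =>
    integrable_finset_sum _ fun k _ => (integrable_coord_mul μ (i, k) (j, k) hsphere).mul_const _)]
  have step : ∀ i : Fin d,
      ∫ ψ, ∑ j : Fin d, ∑ k : Fin d, ψ (i, k) * (starRingEnd ℂ) (ψ (j, k)) * H j i ∂μ
      = ∑ j : Fin d, ∑ k : Fin d,
          (∫ ψ, ψ (i, k) * (starRingEnd ℂ) (ψ (j, k)) ∂μ) * H j i := by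
    intro i
    rw [integral_finset_sum _ (fun j _ => integrable_finset_sum _ fun k _ =>
      (integrable_coord_mul μ (i, k) (j, k) hsphere).mul_const _)]
    refine Finset.sum_congr rfl fun j _ => ?_
    rw [integral_finset_sum _ (fun k _ =>
      (integrable_coord_mul μ (i, k) (j, k) hsphere).mul_const _)]
    exact Finset.sum_congr rfl fun k _ => integral_mul_const _ _
  simp_rw [step]
  have hmom : ∀ (i j k : Fin d),
      (∫ ψ, ψ (i, k) * (starRingEnd ℂ) (ψ (j, k)) ∂μ)
        = if j = i then 1 / ((d : ℂ) * (d : ℂ)) else 0 := by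
    intro i j k
    by_cases hij : j = i
    · subst hij
      rw [moment_diag μ hsphere hinv (j, k), if_pos rfl]
      congr 1
      simp [Fintype.card_prod]
    · rw [if_neg hij]
      refine moment_offdiag μ hinv ?_
      intro h
      exact hij (congrArg Prod.fst h).symm
  simp_rw [hmom]
  have hd' : (d : ℂ) ≠ 0 := Nat.cast_ne_zero.mpr hd.ne'
  rw [Matrix.trace]
  rw [Finset.sum_div]
  refine Finset.sum_congr rfl fun i _ => ?_
  rw [Finset.sum_eq_single i]
  · rw [if_pos rfl]
    rw [Finset.sum_const, Finset.card_univ, Fintype.card_fin, nsmul_eq_mul]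
    rw [Matrix.diag_apply]
    field_simp
  · intro j _ hj
    rw [if_neg hj]
    simp
  · simp

end AuxTrace


open MeasureTheory in
/-- For positive semidefinite `H`, the ensemble-average ergotropy of
the reduced state satisfies `0 ≤ ⟨E⟩ ≤ tr(H)/d`. -/
theorem average_ergotropy_bounds {d : ℕ} (H : Matrix (Fin d) (Fin d) ℂ)
    (hH : H.PosSemidef)
    (μ : Measure (EuclideanSpace ℂ (Fin d × Fin d))) [IsProbabilityMeasure μ]
    (hsphere : ∀ᵐ ψ ∂μ, ‖ψ‖ = 1)
    (hinv : ∀ U : EuclideanSpace ℂ (Fin d × Fin d) ≃ₗᵢ[ℂ] EuclideanSpace ℂ (Fin d × Fin d),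
      Measure.map U μ = μ) :
    0 ≤ ∫ ψ, ergotropy (partialTrace ψ) H ∂μ ∧
      ∫ ψ, ergotropy (partialTrace ψ) H ∂μ ≤ (H.trace).re / d := by
  classical
  rcases Nat.eq_zero_or_pos d with hd0 | hd
  · exfalso
    subst hd0
    have hzero : ∀ ψ : EuclideanSpace ℂ (Fin 0 × Fin 0), ‖ψ‖ = 0 := by
      intro ψ
      rw [EuclideanSpace.norm_eq]
      simp
    obtain ⟨ψ, hψ⟩ := hsphere.exists
    rw [hzero ψ] at hψ
    norm_num at hψ
  have hPSD : ∀ ψ : EuclideanSpace ℂ (Fin d × Fin d), (partialTrace ψ).PosSemidef :=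
    fun ψ => partialTrace_posSemidef ψ
  have hlow : ∀ ψ : EuclideanSpace ℂ (Fin d × Fin d), 0 ≤ ergotropy (partialTrace ψ) H := by
    intro ψ
    have := sum_eigs_le_trace (hPSD ψ).1 hH.1
    simp only [ergotropy]
    linarith
  have hup : ∀ ψ : EuclideanSpace ℂ (Fin d × Fin d),
      ergotropy (partialTrace ψ) H ≤ ((partialTrace ψ * H).trace).re := by
    intro ψ
    have hsum : 0 ≤ ∑ k, eigsDec (partialTrace ψ) k * eigsInc H k :=
      Finset.sum_nonneg fun k _ =>
        mul_nonneg (eigsDec_nonneg (hPSD ψ) k) (eigsInc_nonneg hH k)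
    simp only [ergotropy]
    linarith
  have hfint : Integrable (fun ψ => (partialTrace ψ * H).trace) μ :=
    integrable_trace H μ hsphere
  have hgint : Integrable (fun ψ => ((partialTrace ψ * H).trace).re) μ := hfint.re
  constructor
  · exact integral_nonneg hlow
  · calc ∫ ψ, ergotropy (partialTrace ψ) H ∂μ
        ≤ ∫ ψ, ((partialTrace ψ * H).trace).re ∂μ :=
          integral_mono_of_nonneg (Filter.Eventually.of_forall hlow) hgint
            (Filter.Eventually.of_forall hup)
      _ = (∫ ψ, (partialTrace ψ * H).trace ∂μ).re := integral_re hfint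
      _ = (H.trace / (d : ℂ)).re := by rw [integral_trace H μ hd hsphere hinv]
      _ = (H.trace).re / d := Complex.div_natCast_re _ _
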